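/- Under the diagonal Fisher-information abstraction, the contribution of the unmasked parameters satisfies Σ_{j∈J, j∉M} (ω*_{r,j} − ω*_j)² ≤ c₂ · Σ_{j∈J, j∉M} F_{f,j}²/(F_j²·F_{r,j}²) + c₃, where c₂ = 2 · max_{j∈J} (α·b_{r,j})² and c₃ = 2 · Σ_{j∈J} (b_j − β·b_{r,j})²/F_j². -/

import Mathlib

/-- Bounding the unmasked contribution in the proof of Theorem 1:
`Σ_{j∉M} (ω*_{r,j} − ω*_j)² ≤ c₂ · Σ_{j∉M} F_{f,j}²/(F_j²·F_{r,j}²) + c₃`. -/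
theorem unmasked_contribution_bound
    {ι : Type*} [Fintype ι] [Nonempty ι] [DecidableEq ι]
    (M : Finset ι)
    (α β : ℝ) (hα : 0 < α) (hβ : 0 < β) (hαβ : α + β = 1)
    (Ff Fr : ι → ℝ) (hFf : ∀ j, 0 ≤ Ff j) (hFr : ∀ j, 0 < Fr j)
    (F : ι → ℝ) (hF : ∀ j, F j = α * Ff j + β * Fr j)
    (b br : ι → ℝ)
    (ωstar ωrstar : ι → ℝ)
    (hωstar : ∀ j, ωstar j = b j / F j)
    (hωrstar : ∀ j, ωrstar j = br j / Fr j)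
    (c₂ c₃ : ℝ)
    (hc₂ : c₂ = 2 * Finset.univ.sup' Finset.univ_nonempty (fun j => (α * br j) ^ 2))
    (hc₃ : c₃ = 2 * ∑ j, (b j - β * br j) ^ 2 / (F j) ^ 2) :
    ∑ j ∈ Finset.univ \ M, (ωrstar j - ωstar j) ^ 2 ≤
      c₂ * ∑ j ∈ Finset.univ \ M, (Ff j) ^ 2 / ((F j) ^ 2 * (Fr j) ^ 2) + c₃ := by
  have hFpos : ∀ j, 0 < F j := by
    intro j
    rw [hF j]
    have := mul_nonneg hα.le (hFf j)
    have := mul_pos hβ (hFr j)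
    linarith
  -- pointwise bound
  have key : ∀ j, (ωrstar j - ωstar j) ^ 2 ≤
      2 * (α * br j) ^ 2 * ((Ff j) ^ 2 / ((F j) ^ 2 * (Fr j) ^ 2))
      + 2 * ((b j - β * br j) ^ 2 / (F j) ^ 2) := by
    intro j
    have hFne : F j ≠ 0 := (hFpos j).ne'
    have hFrne : Fr j ≠ 0 := (hFr j).ne'
    set A := α * br j * Ff j / (F j * Fr j) with hA
    set B := (β * br j - b j) / F j with hB
    have hsplit : ωrstar j - ωstar j = A + B := by
      rw [hωrstar j, hωstar j, hA, hB]
      field_simp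
      rw [hF j]; ring
    have hA2 : A ^ 2 = (α * br j) ^ 2 * ((Ff j) ^ 2 / ((F j) ^ 2 * (Fr j) ^ 2)) := by
      rw [hA]; field_simp
    have hB2 : B ^ 2 = (b j - β * br j) ^ 2 / (F j) ^ 2 := by
      rw [hB]; rw [div_pow]; ring_nf
    rw [hsplit]
    nlinarith [sq_nonneg (A - B), hA2, hB2]
  have hsup : ∀ j, (α * br j) ^ 2 ≤
      Finset.univ.sup' Finset.univ_nonempty (fun j => (α * br j) ^ 2) :=
    by intro j; exact Finset.le_sup' (fun j => (α * br j) ^ 2) (Finset.mem_univ j)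
  calc ∑ j ∈ Finset.univ \ M, (ωrstar j - ωstar j) ^ 2
      ≤ ∑ j ∈ Finset.univ \ M,
          (2 * (α * br j) ^ 2 * ((Ff j) ^ 2 / ((F j) ^ 2 * (Fr j) ^ 2))
            + 2 * ((b j - β * br j) ^ 2 / (F j) ^ 2)) :=
        Finset.sum_le_sum fun j _ => key j
    _ = ∑ j ∈ Finset.univ \ M, 2 * (α * br j) ^ 2 * ((Ff j) ^ 2 / ((F j) ^ 2 * (Fr j) ^ 2))
        + ∑ j ∈ Finset.univ \ M, 2 * ((b j - β * br j) ^ 2 / (F j) ^ 2) :=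
        Finset.sum_add_distrib
    _ ≤ c₂ * ∑ j ∈ Finset.univ \ M, (Ff j) ^ 2 / ((F j) ^ 2 * (Fr j) ^ 2) + c₃ := by
        gcongr ?_ + ?_
        · rw [Finset.mul_sum]
          apply Finset.sum_le_sum
          intro j _
          rw [hc₂]
          have hnn : 0 ≤ (Ff j) ^ 2 / ((F j) ^ 2 * (Fr j) ^ 2) := by positivity
          nlinarith [hsup j, hnn]
        · rw [hc₃, Finset.mul_sum]
          apply Finset.sum_le_sum_of_subset_of_nonneg (Finset.sdiff_subset)
          intro j _ _
          positivity
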